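/- There is at most one function V : [−p/α,∞) → ℝ that is a nondecreasing, nonnegative viscosity solution of the HJB equation on (−p/α,∞), is continuous on [−p/α,∞) and locally Lipschitz on (−p/α,∞), satisfies a linear growth bound (there exist constants c₁, c₂ with V(x) ≤ c₁·x + c₂ for all x ≥ −p/α), and satisfies the boundary condition V(−p/α) = 0. That is, any two functions with all these properties coincide on [−p/α,∞). -/

import Mathlib

open MeasureTheory Set Filter

noncomputable section

/-- Drift coefficient: c(x) = p + r x for x ≥ 0, c(x) = p + α x for x < 0. -/
def drift (p r a x : ℝ) : ℝ := if 0 ≤ x then p + r * x else p + a * x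

/-- I_v(x) = ∫_{(0, x+p/α]} v(x−u) dμ(u). -/
def Iop (p a : ℝ) (mu : Measure ℝ) (v : ℝ → ℝ) (x : ℝ) : ℝ :=
  ∫ u in Set.Ioc (0 : ℝ) (x + p / a), v (x - u) ∂mu

/-- L_{v,φ}(x) = c(x)·φ′(x) − (λ+δ)·v(x) + λ·I_v(x). -/
def Lphi (p lam d r a : ℝ) (mu : Measure ℝ) (v phi : ℝ → ℝ) (x : ℝ) : ℝ :=
  drift p r a x * deriv phi x - (lam + d) * v x + lam * Iop p a mu v x

/-- G_v(x) = c(x) − (λ+δ)·v(x) + λ·I_v(x). -/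
def Gop (p lam d r a : ℝ) (mu : Measure ℝ) (v : ℝ → ℝ) (x : ℝ) : ℝ :=
  drift p r a x - (lam + d) * v x + lam * Iop p a mu v x

/-- Viscosity sub-solution of the HJB equation on J ⊆ (−p/α,∞). -/
def IsViscSubsol (p lam d r a : ℝ) (mu : Measure ℝ) (u : ℝ → ℝ) (J : Set ℝ) : Prop :=
  ∀ x ∈ J, ∀ phi : ℝ → ℝ, ContDiff ℝ 1 phi → phi x = u x →
    (∀ y ∈ Set.Ici (-(p / a)), u y - phi y ≤ u x - phi x) →
    0 ≤ max (1 - deriv phi x) (Lphi p lam d r a mu u phi x)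

/-- Viscosity super-solution of the HJB equation on J ⊆ (−p/α,∞). -/
def IsViscSupersol (p lam d r a : ℝ) (mu : Measure ℝ) (u : ℝ → ℝ) (J : Set ℝ) : Prop :=
  ∀ x ∈ J, ∀ phi : ℝ → ℝ, ContDiff ℝ 1 phi → phi x = u x →
    (∀ y ∈ Set.Ici (-(p / a)), u x - phi x ≤ u y - phi y) →
    max (1 - deriv phi x) (Lphi p lam d r a mu u phi x) ≤ 0

/-- Viscosity solution: both sub- and super-solution. -/
def IsViscSol (p lam d r a : ℝ) (mu : Measure ℝ) (u : ℝ → ℝ) (J : Set ℝ) : Prop :=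
  IsViscSubsol p lam d r a mu u J ∧ IsViscSupersol p lam d r a mu u J

/-- Locally Lipschitz on a set. -/
def LocLipOn (s : Set ℝ) (u : ℝ → ℝ) : Prop :=
  ∀ x ∈ s, ∃ K : NNReal, ∃ eps : ℝ, 0 < eps ∧ LipschitzOnWith K u (s ∩ Metric.ball x eps)

/-- Linear growth bound on [−p/α,∞). -/
def LinGrowth (p a : ℝ) (u : ℝ → ℝ) : Prop :=
  ∃ c₁ c₂ : ℝ, ∀ x : ℝ, -(p / a) ≤ x → u x ≤ c₁ * x + c₂

/-- Standard value-function candidate. -/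
structure IsCandidate (p lam d r a : ℝ) (mu : Measure ℝ) (V : ℝ → ℝ) : Prop where
  cont : ContinuousOn V (Set.Ici (-(p / a)))
  nonneg : ∀ x ∈ Set.Ici (-(p / a)), 0 ≤ V x
  mono : MonotoneOn V (Set.Ici (-(p / a)))
  boundary : V (-(p / a)) = 0
  slope : ∀ x y : ℝ, -(p / a) ≤ x → x ≤ y → y - x ≤ V y - V x
  growth : ∀ x : ℝ, 0 ≤ x → V x ≤ (d * x + p) / (d - r) + p / a
  locLip : LocLipOn (Set.Ioi (-(p / a))) V
  visc : IsViscSol p lam d r a mu V (Set.Ioi (-(p / a)))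
  derivLim : ∀ x ∈ Set.Ioi (-(p / a)), ∀ (h : ℕ → ℝ) (dd : ℝ),
      ((∀ n, 0 < h n) ∨ (∀ n, h n < 0)) →
      Filter.Tendsto h Filter.atTop (nhds 0) →
      Filter.Tendsto (fun n => (V (x + h n) - V x) / h n) Filter.atTop (nhds dd) →
      1 ≤ dd ∧ dd * drift p r a x - (lam + d) * V x + lam * Iop p a mu V x ≤ 0

/-- The set A = {x ∈ [−p/α,∞) : G_V(x) = 0}. -/
def setA (p lam d r a : ℝ) (mu : Measure ℝ) (V : ℝ → ℝ) : Set ℝ :=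
  {x | x ∈ Set.Ici (-(p / a)) ∧ Gop p lam d r a mu V x = 0}

/-- The set B = {x ∈ [−p/α,∞) : V′(x) exists, V′(x) = 1 and G_V(x) < 0}. -/
def setB (p lam d r a : ℝ) (mu : Measure ℝ) (V : ℝ → ℝ) : Set ℝ :=
  {x | x ∈ Set.Ici (-(p / a)) ∧ DifferentiableAt ℝ V x ∧ deriv V x = 1 ∧
      Gop p lam d r a mu V x < 0}

/-- The set C = [−p/α,∞) \ (A ∪ B). -/
def setC (p lam d r a : ℝ) (mu : Measure ℝ) (V : ℝ → ℝ) : Set ℝ :=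
  Set.Ici (-(p / a)) \ (setA p lam d r a mu V ∪ setB p lam d r a mu V)

def ggA (b x : ℝ) : ℝ :=
  (x - b) * Real.arsinh (x - b) - Real.sqrt (1 + (x - b) ^ 2) + 1

lemma sq_add_one_pos (t : ℝ) : (0:ℝ) < 1 + t ^ 2 := by positivity

lemma hasDerivAt_ggA (b x : ℝ) : HasDerivAt (ggA b) (Real.arsinh (x - b)) x := by
  have hid : HasDerivAt (fun y : ℝ => y - b) 1 x := (hasDerivAt_id x).sub_const b
  have h1 : HasDerivAt (fun y : ℝ => (y - b) * Real.arsinh (y - b))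
      (Real.arsinh (x - b) + (x - b) * ((Real.sqrt (1 + (x - b) ^ 2))⁻¹)) x := by
    have ha : HasDerivAt (fun y : ℝ => Real.arsinh (y - b))
        ((Real.sqrt (1 + (x - b) ^ 2))⁻¹ * 1) x :=
      HasDerivAt.comp (h₂ := Real.arsinh) x (Real.hasDerivAt_arsinh (x - b)) hid
    have := hid.mul ha
    convert this using 1 <;> first | rfl | ring
  have hsqin : HasDerivAt (fun y : ℝ => 1 + (y - b) ^ 2) (2 * (x - b)) x := by
    have := (hid.pow 2).const_add (1:ℝ)
    simpa [mul_comm] using this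
  have hsq : HasDerivAt (fun y : ℝ => Real.sqrt (1 + (y - b) ^ 2))
      ((2 * (x - b)) / (2 * Real.sqrt (1 + (x - b) ^ 2))) x := by
    exact (Real.hasDerivAt_sqrt (ne_of_gt (sq_add_one_pos (x - b)))).comp x hsqin |>.congr_deriv
        (by ring)
  have hrt : Real.sqrt (1 + (x - b) ^ 2) ≠ 0 :=
    ne_of_gt (Real.sqrt_pos.2 (sq_add_one_pos _))
  have := (h1.sub hsq).add_const (1:ℝ)
  convert this using 1 <;> try rfl
  field_simp
  ring

lemma contDiff_ggA (b : ℝ) : ContDiff ℝ 1 (ggA b) := by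
  rw [contDiff_one_iff_deriv]
  constructor
  · exact fun x => (hasDerivAt_ggA b x).differentiableAt
  · have : deriv (ggA b) = fun x => Real.arsinh (x - b) := by
      funext x; exact (hasDerivAt_ggA b x).deriv
    rw [this]
    exact Real.continuous_arsinh.comp (continuous_id.sub continuous_const)

lemma ggA_self (b : ℝ) : ggA b b = 0 := by
  simp [ggA, Real.arsinh_zero]

lemma ggA_mono (b : ℝ) : MonotoneOn (ggA b) (Set.Ici b) := by
  apply monotoneOn_of_deriv_nonneg (convex_Ici b)
    ((contDiff_ggA b).continuous.continuousOn)
    (fun x _ => ((hasDerivAt_ggA b x).differentiableAt).differentiableWithinAt)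
  intro x hx
  rw [(hasDerivAt_ggA b x).deriv]
  rw [interior_Ici] at hx
  exact Real.arsinh_nonneg_iff.2 (by linarith [hx.out])

lemma ggA_nonneg (b : ℝ) {x : ℝ} (hx : b ≤ x) : 0 ≤ ggA b x := by
  have := ggA_mono b self_mem_Ici hx hx
  rw [ggA_self] at this; exact this

lemma arsinh_le_self {x : ℝ} (hx : 0 ≤ x) : Real.arsinh x ≤ x := by
  rcases eq_or_lt_of_le hx with h | h
  · simp [← h, Real.arsinh_zero]
  · have : x < Real.sinh x := Real.self_lt_sinh_iff.2 h
    calc Real.arsinh x ≤ Real.arsinh (Real.sinh x) := Real.arsinh_le_arsinh.2 this.le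
      _ = x := Real.arsinh_sinh x

lemma sqrt_one_add_sq_le {T : ℝ} (hT : 0 ≤ T) : Real.sqrt (1 + T ^ 2) ≤ 1 + T := by
  rw [show (1:ℝ) + T = Real.sqrt ((1+T)^2) from (Real.sqrt_sq (by linarith)).symm]
  apply Real.sqrt_le_sqrt; nlinarith

lemma ggA_superlin (b e C D : ℝ) (he : 0 < e) :
    ∃ R : ℝ, b ≤ R ∧ ∀ x, R ≤ x → C * x + D ≤ e * ggA b x := by
  set A₁ : ℝ := 1 + (|C| + 1) / e with hA₁
  have hA₁pos : 0 < A₁ := by positivity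
  refine ⟨max (b + Real.sinh A₁) (max 0 (D + (|C| + 1) * b)), ?_, ?_⟩
  · have : 0 ≤ Real.sinh A₁ := Real.sinh_nonneg_iff.2 hA₁pos.le
    calc b ≤ b + Real.sinh A₁ := by linarith
      _ ≤ _ := le_max_left _ _
  intro x hx
  have hx1 : b + Real.sinh A₁ ≤ x := le_trans (le_max_left _ _) hx
  have hx2 : 0 ≤ x := le_trans (le_trans (le_max_left _ _) (le_max_right _ _)) hx
  have hx3 : D + (|C| + 1) * b ≤ x := le_trans (le_trans (le_max_right _ _) (le_max_right _ _)) hx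
  set T := x - b with hT
  have hsinh : Real.sinh A₁ ≤ T := by simp only [hT]; linarith
  have hT0 : 0 ≤ T := le_trans (Real.sinh_nonneg_iff.2 hA₁pos.le) hsinh
  have hS : A₁ ≤ Real.arsinh T := by
    calc A₁ = Real.arsinh (Real.sinh A₁) := (Real.arsinh_sinh A₁).symm
      _ ≤ Real.arsinh T := Real.arsinh_le_arsinh.2 hsinh
  have hS0 : 0 ≤ Real.arsinh T := le_trans hA₁pos.le hS
  have hgg : T * (A₁ - 1) ≤ ggA b x := by
    have h1 : Real.sqrt (1 + T ^ 2) ≤ 1 + T := sqrt_one_add_sq_le hT0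
    have h2 : T * (A₁ - 1) ≤ T * (Real.arsinh T - 1) := by
      apply mul_le_mul_of_nonneg_left (by linarith) hT0
    have : ggA b x = T * Real.arsinh T - Real.sqrt (1 + T ^ 2) + 1 := rfl
    nlinarith
  have hTA : T * (A₁ - 1) = (|C| + 1) / e * T := by ring
  have key : (|C| + 1) * T ≤ e * ggA b x := by
    calc (|C| + 1) * T = e * ((|C| + 1) / e * T) := by field_simp
      _ ≤ e * ggA b x := by
          apply mul_le_mul_of_nonneg_left _ he.le
          rw [← hTA]; exact hgg
  have hC : C ≤ |C| := le_abs_self C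
  nlinarith [abs_nonneg C]

lemma ggA_Ebound (b p r d : ℝ) (hp : 0 < p) (hr : 0 < r) (hrd : r < d) :
    ∃ K : ℝ, 0 ≤ K ∧ ∀ x, b ≤ x →
      (p + r * (x - b)) * Real.arsinh (x - b) - d * ggA b x ≤ K := by
  have hd0 : (0:ℝ) < d := lt_trans hr hrd
  have hβ0 : (0:ℝ) < d - r := by linarith
  obtain ⟨T₃, hT₃⟩ : ∃ T₃ : ℝ, T₃ = max (Real.sinh (2 * d / (d - r))) (2 * p / (d - r)) :=
    ⟨_, rfl⟩
  have hT₃0 : 0 ≤ T₃ := by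
    rw [hT₃]; exact le_trans (by positivity) (le_max_right _ _)
  refine ⟨(p + d) * T₃, mul_nonneg (by linarith) hT₃0, ?_⟩
  intro x hx
  obtain ⟨T, hTdef⟩ : ∃ T : ℝ, T = x - b := ⟨_, rfl⟩
  have hT0 : 0 ≤ T := by rw [hTdef]; linarith
  obtain ⟨S, hSdef⟩ : ∃ S : ℝ, S = Real.arsinh T := ⟨_, rfl⟩
  have hS0 : 0 ≤ S := by rw [hSdef]; exact Real.arsinh_nonneg_iff.2 hT0
  have hSle : S ≤ T := by rw [hSdef]; exact arsinh_le_self hT0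
  have hsqrt : 1 + T - Real.sqrt (1 + T ^ 2) ≥ 0 := by
    have := sqrt_one_add_sq_le hT0; linarith
  have hgg : ggA b x = T * S - Real.sqrt (1 + T ^ 2) + 1 := by
    rw [ggA, ← hTdef, ← hSdef]
  have hgoal : (p + r * (x - b)) * Real.arsinh (x - b) = (p + r * T) * S := by
    rw [← hTdef, hSdef, hTdef]
  rw [hgoal, hgg]
  have hE : (p + r * T) * S - d * (T * S - Real.sqrt (1 + T ^ 2) + 1)
      ≤ p * S - (d - r) * T * S + d * T := by
    nlinarith [mul_nonneg hd0.le hsqrt]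
  rcases le_total T T₃ with h | h
  · have h1 : p * S ≤ p * T₃ := mul_le_mul_of_nonneg_left (hSle.trans h) hp.le
    have h2 : d * T ≤ d * T₃ := mul_le_mul_of_nonneg_left h hd0.le
    have h3 : 0 ≤ (d - r) * T * S := mul_nonneg (mul_nonneg hβ0.le hT0) hS0
    nlinarith
  · have hS2 : 2 * d / (d - r) ≤ S := by
      rw [hSdef]
      calc 2 * d / (d - r) = Real.arsinh (Real.sinh (2 * d / (d - r))) :=
            (Real.arsinh_sinh _).symm
        _ ≤ Real.arsinh T :=
            Real.arsinh_le_arsinh.2 (le_trans (hT₃ ▸ le_max_left _ _) h)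
    have hTp : 2 * p / (d - r) ≤ T := le_trans (hT₃ ▸ le_max_right _ _) h
    rw [div_le_iff₀ hβ0] at hS2 hTp
    have h1 : 2 * p * S ≤ T * (d - r) * S := mul_le_mul_of_nonneg_right hTp hS0
    have h2 : 2 * d * T ≤ S * (d - r) * T := mul_le_mul_of_nonneg_right hS2 hT0
    nlinarith

lemma drift_le {p r a : ℝ} (hp : 0 < p) (hr : 0 < r) (hra : r < a) (x : ℝ)
    (hx : -(p/a) ≤ x) : drift p r a x ≤ p + r * (x + p/a) := by
  have ha : 0 < a := lt_trans hr hra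
  have hpa : 0 < p / a := div_pos hp ha
  unfold drift
  split_ifs with h
  · nlinarith
  · push_neg at h
    have h1 : (a - r) * x ≤ 0 := mul_nonpos_of_nonneg_of_nonpos (by linarith) h.le
    have h2 : 0 < r * (p/a) := by positivity
    nlinarith

lemma drift_lip {p r a : ℝ} (hr : 0 < r) (hra : r < a) (x y : ℝ) :
    |drift p r a x - drift p r a y| ≤ a * |x - y| := by
  have ha : 0 < a := lt_trans hr hra
  unfold drift
  rcases le_or_gt 0 x with hx | hx <;> rcases le_or_gt 0 y with hy | hy
  · rw [if_pos hx, if_pos hy, abs_le]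
    constructor <;> [nlinarith [neg_abs_le (x-y), le_abs_self (x-y)];
      nlinarith [neg_abs_le (x-y), le_abs_self (x-y)]]
  · rw [if_pos hx, if_neg (not_le.2 hy), abs_le]
    have habs : x - y = |x - y| := (abs_of_pos (by linarith)).symm
    constructor <;> nlinarith
  · rw [if_neg (not_le.2 hx), if_pos hy, abs_le]
    have habs : y - x = |x - y| := by rw [abs_sub_comm]; exact (abs_of_pos (by linarith)).symm
    constructor <;> nlinarith
  · rw [if_neg (not_le.2 hx), if_neg (not_le.2 hy), abs_le]
    constructor <;> nlinarith [neg_abs_le (x-y), le_abs_self (x-y)]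

lemma intgOn (mu : Measure ℝ) [IsFiniteMeasure mu] {b : ℝ} {w : ℝ → ℝ}
    (hcont : ContinuousOn w (Set.Ici b)) (hmono : MonotoneOn w (Set.Ici b))
    (hnn : ∀ z ∈ Set.Ici b, 0 ≤ w z) {x : ℝ} (hx : b ≤ x) :
    IntegrableOn (fun t => w (x - t)) (Set.Ioc 0 (x - b)) mu := by
  have hmaps : Set.MapsTo (fun t => x - t) (Set.Ioc 0 (x - b)) (Set.Ici b) :=
    fun t ht => by simp only [Set.mem_Ici]; have := ht.2; linarith [ht.1]
  have hcont2 : ContinuousOn (fun t => w (x - t)) (Set.Ioc 0 (x - b)) :=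
    hcont.comp ((continuous_const.sub continuous_id).continuousOn) hmaps
  refine ⟨hcont2.aestronglyMeasurable measurableSet_Ioc, ?_⟩
  apply HasFiniteIntegral.restrict_of_bounded (C := w x) (measure_lt_top mu _)
  rw [ae_restrict_iff' measurableSet_Ioc]
  apply ae_of_all
  intro t ht
  have h1 : b ≤ x - t := by have := ht.2; linarith
  have h2 : 0 ≤ w (x - t) := hnn _ h1
  have h3 : w (x - t) ≤ w x := hmono h1 hx (by linarith [ht.1])
  rw [Real.norm_eq_abs, abs_of_nonneg h2]
  exact h3

lemma toReal_prob_le_one (mu : Measure ℝ) [IsProbabilityMeasure mu] (s : Set ℝ) :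
    (mu s).toReal ≤ 1 := by
  have h := prob_le_one (μ := mu) (s := s)
  calc (mu s).toReal ≤ (1 : ENNReal).toReal := ENNReal.toReal_mono ENNReal.one_ne_top h
    _ = 1 := ENNReal.toReal_one

lemma setIntegral_le_const (mu : Measure ℝ) [IsProbabilityMeasure mu]
    {f : ℝ → ℝ} {s : Set ℝ} (hs : MeasurableSet s) (hf : IntegrableOn f s mu)
    {c : ℝ} (hc : 0 ≤ c) (hb : ∀ t ∈ s, f t ≤ c) : ∫ t in s, f t ∂mu ≤ c := by
  calc ∫ t in s, f t ∂mu ≤ ∫ _ in s, c ∂mu :=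
        setIntegral_mono_on hf (integrableOn_const (measure_ne_top mu s)) hs hb
    _ = (mu s).toReal • c := setIntegral_const c
    _ ≤ c := by
        rw [smul_eq_mul]
        nlinarith [toReal_prob_le_one mu s, ENNReal.toReal_nonneg (a := mu s)]

lemma Iop_diff (p a : ℝ) (hp : 0 < p) (ha : 0 < a) (mu : Measure ℝ) [IsProbabilityMeasure mu]
    {u v : ℝ → ℝ}
    (hu_cont : ContinuousOn u (Set.Ici (-(p/a)))) (hu_mono : MonotoneOn u (Set.Ici (-(p/a))))
    (hu_nn : ∀ z ∈ Set.Ici (-(p/a)), 0 ≤ u z)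
    (hv_cont : ContinuousOn v (Set.Ici (-(p/a)))) (hv_mono : MonotoneOn v (Set.Ici (-(p/a))))
    (hv_nn : ∀ z ∈ Set.Ici (-(p/a)), 0 ≤ v z)
    {x y c₀ s : ℝ} (hx : -(p/a) ≤ x) (hy : -(p/a) ≤ y)
    (hc₀ : 0 ≤ c₀) (hs0 : 0 ≤ s)
    (hpb : ∀ t ∈ Set.Ioc (0:ℝ) (min x y + p/a), u (x - t) - v (y - t) ≤ c₀)
    (hsliver : ∀ t ∈ Set.Ioc (y + p/a) (x + p/a), u (x - t) ≤ s) :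
    Iop p a mu u x - Iop p a mu v y ≤ c₀ + s := by
  have hxb : x + p/a = x - (-(p/a)) := by ring
  have hyb : y + p/a = y - (-(p/a)) := by ring
  have hIu : IntegrableOn (fun t => u (x - t)) (Set.Ioc 0 (x + p/a)) mu := by
    rw [hxb]; exact intgOn mu hu_cont hu_mono hu_nn hx
  have hIv : IntegrableOn (fun t => v (y - t)) (Set.Ioc 0 (y + p/a)) mu := by
    rw [hyb]; exact intgOn mu hv_cont hv_mono hv_nn hy
  have h0x : (0:ℝ) ≤ x + p/a := by have : 0 < p/a := div_pos hp ha; linarith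
  have h0y : (0:ℝ) ≤ y + p/a := by have : 0 < p/a := div_pos hp ha; linarith
  rcases le_total y x with hxy | hxy
  · -- y ≤ x : split the u-integral
    have hmin : min x y = y := min_eq_right hxy
    have hsplit : Set.Ioc (0:ℝ) (x + p/a)
        = Set.Ioc 0 (y + p/a) ∪ Set.Ioc (y + p/a) (x + p/a) :=
      (Set.Ioc_union_Ioc_eq_Ioc h0y (by linarith)).symm
    have hIu1 : IntegrableOn (fun t => u (x - t)) (Set.Ioc 0 (y + p/a)) mu :=
      hIu.mono_set (by rw [hsplit]; exact Set.subset_union_left)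
    have hIu2 : IntegrableOn (fun t => u (x - t)) (Set.Ioc (y + p/a) (x + p/a)) mu :=
      hIu.mono_set (by rw [hsplit]; exact Set.subset_union_right)
    have hIopu : Iop p a mu u x
        = (∫ t in Set.Ioc 0 (y + p/a), u (x - t) ∂mu)
          + ∫ t in Set.Ioc (y + p/a) (x + p/a), u (x - t) ∂mu := by
      rw [Iop, hsplit]
      exact setIntegral_union (Set.Ioc_disjoint_Ioc_of_le le_rfl) measurableSet_Ioc hIu1 hIu2
    have hcommon : (∫ t in Set.Ioc 0 (y + p/a), u (x - t) ∂mu) - Iop p a mu v y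
        ≤ c₀ := by
      rw [Iop, ← integral_sub hIu1 hIv]
      apply setIntegral_le_const mu measurableSet_Ioc (hIu1.sub hIv) hc₀
      intro t ht
      exact hpb t (by rwa [hmin])
    have hsl : (∫ t in Set.Ioc (y + p/a) (x + p/a), u (x - t) ∂mu) ≤ s := by
      apply setIntegral_le_const mu measurableSet_Ioc hIu2 hs0 hsliver
    rw [hIopu]; linarith
  · -- x ≤ y : split the v-integral
    have hmin : min x y = x := min_eq_left hxy
    have hsplit : Set.Ioc (0:ℝ) (y + p/a)
        = Set.Ioc 0 (x + p/a) ∪ Set.Ioc (x + p/a) (y + p/a) :=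
      (Set.Ioc_union_Ioc_eq_Ioc h0x (by linarith)).symm
    have hIv1 : IntegrableOn (fun t => v (y - t)) (Set.Ioc 0 (x + p/a)) mu :=
      hIv.mono_set (by rw [hsplit]; exact Set.subset_union_left)
    have hIv2 : IntegrableOn (fun t => v (y - t)) (Set.Ioc (x + p/a) (y + p/a)) mu :=
      hIv.mono_set (by rw [hsplit]; exact Set.subset_union_right)
    have hIopv : Iop p a mu v y
        = (∫ t in Set.Ioc 0 (x + p/a), v (y - t) ∂mu)
          + ∫ t in Set.Ioc (x + p/a) (y + p/a), v (y - t) ∂mu := by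
      rw [Iop, hsplit]
      exact setIntegral_union (Set.Ioc_disjoint_Ioc_of_le le_rfl) measurableSet_Ioc hIv1 hIv2
    have hnn2 : 0 ≤ ∫ t in Set.Ioc (x + p/a) (y + p/a), v (y - t) ∂mu := by
      apply setIntegral_nonneg measurableSet_Ioc
      intro t ht
      exact hv_nn _ (by simp only [Set.mem_Ici]; have := ht.2; linarith)
    have hcommon : Iop p a mu u x - (∫ t in Set.Ioc 0 (x + p/a), v (y - t) ∂mu)
        ≤ c₀ := by
      rw [Iop, ← integral_sub hIu hIv1]
      apply setIntegral_le_const mu measurableSet_Ioc (hIu.sub hIv1) hc₀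
      intro t ht
      exact hpb t (by rwa [hmin])
    rw [hIopv]; linarith


lemma strictMono_two_mul_add_one : StrictMono (fun m : ℕ => 2 * m + 1) := by
  intro i j hij
  simp only
  omega

/-- doubled penalized functional used in the comparison argument -/
def FF (uu vv : ℝ → ℝ) (b e c : ℝ) (z : ℝ × ℝ) : ℝ :=
  uu z.1 - vv z.2 - (e * ggA b z.1 + c * (z.1 - z.2) ^ 2)

lemma FF_apply (uu vv : ℝ → ℝ) (b e c : ℝ) (z : ℝ × ℝ) :
    FF uu vv b e c z = uu z.1 - vv z.2 - (e * ggA b z.1 + c * (z.1 - z.2) ^ 2) := rfl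

set_option maxHeartbeats 1600000 in
lemma comp_le
    (p lam d r a : ℝ) (hp : 0 < p) (hlam : 0 < lam) (hd : 0 < d)
    (hr : 0 < r) (hra : r < a) (hrd : r < d)
    (mu : Measure ℝ) [IsProbabilityMeasure mu]
    (u v : ℝ → ℝ)
    (hu_mono : MonotoneOn u (Set.Ici (-(p / a))))
    (hu_nonneg : ∀ x ∈ Set.Ici (-(p / a)), 0 ≤ u x)
    (hu_sub : IsViscSubsol p lam d r a mu u (Set.Ioi (-(p / a))))
    (hu_cont : ContinuousOn u (Set.Ici (-(p / a))))
    (hu_growth : LinGrowth p a u)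
    (hu_bdry : u (-(p / a)) = 0)
    (hv_mono : MonotoneOn v (Set.Ici (-(p / a))))
    (hv_nonneg : ∀ x ∈ Set.Ici (-(p / a)), 0 ≤ v x)
    (hv_super : IsViscSupersol p lam d r a mu v (Set.Ioi (-(p / a))))
    (hv_cont : ContinuousOn v (Set.Ici (-(p / a))))
    (hv_bdry : v (-(p / a)) = 0) :
    ∀ x : ℝ, -(p / a) ≤ x → u x ≤ v x := by
  by_contra hcon
  push_neg at hcon
  obtain ⟨x₀, hx₀b, hx₀⟩ := hcon
  have ha : 0 < a := lt_trans hr hra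
  set b : ℝ := -(p / a) with hbdef
  have hpa : 0 < p / a := div_pos hp ha
  have hb0 : b < 0 := by rw [hbdef]; linarith
  set θ : ℝ := (u x₀ - v x₀) / 3 with hθdef
  have hθ : 0 < θ := by rw [hθdef]; linarith
  have huv3 : u x₀ - v x₀ = 3 * θ := by rw [hθdef]; ring
  obtain ⟨K, hK0, hKE⟩ := ggA_Ebound b p r d hp hr hrd
  have hggx₀ : 0 ≤ ggA b x₀ := ggA_nonneg b hx₀b
  set ε : ℝ := min (θ / (ggA b x₀ + 1)) (d * θ / (2 * (K + 1))) with hεdef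
  have hε : 0 < ε := lt_min (by positivity) (by positivity)
  have hεgg : ε * ggA b x₀ ≤ θ := by
    have h1 : ε ≤ θ / (ggA b x₀ + 1) := min_le_left _ _
    have h2 : ε * (ggA b x₀ + 1) ≤ θ := by
      rw [le_div_iff₀ (by positivity)] at h1; linarith
    nlinarith
  have hεK : ε * K ≤ d * θ / 2 := by
    have h1 : ε ≤ d * θ / (2 * (K + 1)) := min_le_right _ _
    have h2 : ε * (2 * (K + 1)) ≤ d * θ := by
      rw [le_div_iff₀ (by positivity)] at h1; linarith
    nlinarith
  obtain ⟨c₁, c₂, hgrow⟩ := hu_growth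
  obtain ⟨R₀, hR₀b, hR₀⟩ := ggA_superlin b ε c₁ (c₂ - 2 * θ + 1) hε
  set R : ℝ := max R₀ x₀ with hRdef
  have hx₀R : x₀ ≤ R := le_max_right _ _
  have hbR : b ≤ R := le_trans hx₀b hx₀R
  have huR0 : 0 ≤ u R := hu_nonneg R hbR
  set Rbig : ℝ := R + Real.sqrt (u R) with hRbigdef
  have hRRbig : R ≤ Rbig := by
    rw [hRbigdef]; nlinarith [Real.sqrt_nonneg (u R)]
  -- the doubled penalized functional
  have hFdef : ∀ (n : ℕ) (z : ℝ × ℝ), FF u v b ε ((n : ℝ) + 1) z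
      = u z.1 - v z.2 - (ε * ggA b z.1 + ((n : ℝ) + 1) * (z.1 - z.2) ^ 2) :=
    fun n z => rfl
  -- localization
  have hloc : ∀ n : ℕ, ∀ z : ℝ × ℝ, b ≤ z.1 → b ≤ z.2 → 2 * θ ≤ FF u v b ε ((n : ℝ) + 1) z →
      z.1 ≤ R ∧ z.2 ≤ Rbig := by
    intro n z hz1 hz2 hF
    rw [FF_apply] at hF
    have hv0 : 0 ≤ v z.2 := hv_nonneg _ hz2
    have hpen : 0 ≤ ((n : ℝ) + 1) * (z.1 - z.2) ^ 2 := by positivity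
    have hkey : 2 * θ ≤ u z.1 - ε * ggA b z.1 := by linarith
    have hz1R : z.1 ≤ R := by
      by_contra hgt
      push_neg at hgt
      have hz1R₀ : R₀ ≤ z.1 := le_trans (le_max_left _ _) hgt.le
      have h1 := hR₀ z.1 hz1R₀
      have h2 := hgrow z.1 hz1
      linarith
    refine ⟨hz1R, ?_⟩
    have hu1 : u z.1 ≤ u R := hu_mono hz1 hbR hz1R
    have hgg0 : 0 ≤ ε * ggA b z.1 := mul_nonneg hε.le (ggA_nonneg b hz1)
    have hns : 0 ≤ (n : ℝ) * (z.1 - z.2) ^ 2 := by positivity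
    have hsq : (z.1 - z.2) ^ 2 ≤ u R := by
      linarith only [hF, hv0, hgg0, hu1, hθ, hns]
    have habs : |z.1 - z.2| ≤ Real.sqrt (u R) := by
      rw [← Real.sqrt_sq_eq_abs]; exact Real.sqrt_le_sqrt hsq
    have h3 := neg_abs_le (z.1 - z.2)
    rw [hRbigdef]; linarith
  -- maximizers over a fixed compact rectangle
  set Kc : Set (ℝ × ℝ) := Set.Icc b R ×ˢ Set.Icc b Rbig with hKcdef
  have hKc_cpt : IsCompact Kc := isCompact_Icc.prod isCompact_Icc
  have hKc_ne : (x₀, x₀) ∈ Kc :=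
    ⟨⟨hx₀b, hx₀R⟩, hx₀b, le_trans hx₀R hRRbig⟩
  have hKsub1 : ∀ z : ℝ × ℝ, z ∈ Kc → z.1 ∈ Set.Ici b := fun z hz => hz.1.1
  have hKsub2 : ∀ z : ℝ × ℝ, z ∈ Kc → z.2 ∈ Set.Ici b := fun z hz => hz.2.1
  have hFcont : ∀ n : ℕ, ContinuousOn (FF u v b ε ((n : ℝ) + 1)) Kc := by
    intro n
    have h1 : ContinuousOn (fun z : ℝ × ℝ => u z.1) Kc :=
      hu_cont.comp continuous_fst.continuousOn hKsub1
    have h2 : ContinuousOn (fun z : ℝ × ℝ => v z.2) Kc :=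
      hv_cont.comp continuous_snd.continuousOn hKsub2
    have h3 : Continuous (fun z : ℝ × ℝ =>
        ε * ggA b z.1 + ((n : ℝ) + 1) * (z.1 - z.2) ^ 2) := by
      apply Continuous.add
      · exact continuous_const.mul ((contDiff_ggA b).continuous.comp continuous_fst)
      · exact continuous_const.mul ((continuous_fst.sub continuous_snd).pow 2)
    exact (h1.sub h2).sub h3.continuousOn
  have hmaxex : ∀ n : ℕ, ∃ z, z ∈ Kc ∧ ∀ w ∈ Kc,
      FF u v b ε ((n : ℝ) + 1) w ≤ FF u v b ε ((n : ℝ) + 1) z := by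
    intro n
    obtain ⟨z, hz, hzmax⟩ := hKc_cpt.exists_isMaxOn ⟨(x₀, x₀), hKc_ne⟩ (hFcont n)
    exact ⟨z, hz, fun w hw => hzmax hw⟩
  choose Z hZmem hZmax using hmaxex
  set Ms : ℕ → ℝ := fun n => FF u v b ε ((n : ℝ) + 1) (Z n) with hMsdef
  have hMs_lb : ∀ n, 2 * θ ≤ Ms n := by
    intro n
    have h := hZmax n (x₀, x₀) hKc_ne
    have h2 : FF u v b ε ((n : ℝ) + 1) (x₀, x₀) = u x₀ - v x₀ - ε * ggA b x₀ := by
      rw [FF_apply]; simp only; ring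
    rw [h2, huv3] at h
    have h3 : Ms n = FF u v b ε ((n : ℝ) + 1) (Z n) := rfl
    rw [h3]; linarith
  have hglob : ∀ n : ℕ, ∀ z : ℝ × ℝ, b ≤ z.1 → b ≤ z.2 →
      FF u v b ε ((n : ℝ) + 1) z ≤ Ms n := by
    intro n z h1 h2
    rcases lt_or_ge (FF u v b ε ((n : ℝ) + 1) z) (2 * θ) with h | h
    · linarith [hMs_lb n]
    · obtain ⟨hR1, hR2⟩ := hloc n z h1 h2 h
      exact hZmax n z ⟨⟨h1, hR1⟩, ⟨h2, hR2⟩⟩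
  have hanti : Antitone Ms := by
    apply antitone_nat_of_succ_le
    intro n
    have hzm := hZmem (n + 1)
    have h1 : FF u v b ε (((n + 1 : ℕ) : ℝ) + 1) (Z (n + 1))
        ≤ FF u v b ε ((n : ℝ) + 1) (Z (n + 1)) := by
      rw [FF_apply, FF_apply]
      have hcast : ((n : ℝ) + 1) ≤ (((n + 1 : ℕ) : ℝ) + 1) := by push_cast; linarith
      have hprod := mul_le_mul_of_nonneg_right hcast
        (sq_nonneg ((Z (n + 1)).1 - (Z (n + 1)).2))
      linarith only [hprod]
    exact le_trans h1 (hglob n _ hzm.1.1 hzm.2.1)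
  have hbdd : BddBelow (Set.range Ms) := ⟨2 * θ, by rintro _ ⟨n, rfl⟩; exact hMs_lb n⟩
  have hLtend : Tendsto Ms atTop (nhds (⨅ n, Ms n)) := tendsto_atTop_ciInf hanti hbdd
  have hmono2 : StrictMono (fun m : ℕ => 2 * m + 1) := strictMono_two_mul_add_one
  have h2n : Tendsto (fun m : ℕ => Ms (2 * m + 1)) atTop (nhds (⨅ n, Ms n)) :=
    hLtend.comp hmono2.tendsto_atTop
  have hgap : Tendsto (fun m : ℕ => Ms m - Ms (2 * m + 1)) atTop (nhds 0) := by
    have := hLtend.sub h2n; simpa using this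
  -- small values of u near the boundary
  have hsmall : ∀ c : ℝ, 0 < c → ∃ η : ℝ, 0 < η ∧ ∀ w ∈ Set.Ici b, |w - b| < η → u w < c := by
    intro c hc
    have hcw : ContinuousWithinAt u (Set.Ici b) b := hu_cont b (Set.self_mem_Ici)
    rw [Metric.continuousWithinAt_iff] at hcw
    obtain ⟨η, hη, hcl⟩ := hcw c hc
    refine ⟨η, hη, fun w hw hdist => ?_⟩
    have := hcl hw (show dist w b < η by rwa [Real.dist_eq])
    rw [Real.dist_eq, hu_bdry] at this
    have h2 := le_abs_self (u w - 0)
    simp only [sub_zero] at this h2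
    linarith
  obtain ⟨η₂, hη₂0, hη₂⟩ := hsmall (2 * θ) (by linarith)
  obtain ⟨η₃, hη₃0, hη₃⟩ := hsmall (d * θ / (2 * lam)) (by positivity)
  set η : ℝ := min η₂ η₃ with hηdef
  have hη0 : 0 < η := lt_min hη₂0 hη₃0
  set γ : ℝ := d * θ / (16 * a + 16 * lam + 16) with hγdef
  have hγ0 : 0 < γ := by positivity
  -- choose the index
  have hev : ∀ᶠ m : ℕ in atTop, Ms m - Ms (2 * m + 1) < γ :=
    hgap.eventually_lt_const hγ0
  obtain ⟨N₁, hN₁⟩ := eventually_atTop.1 hev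
  set m : ℕ := max N₁ (Nat.ceil (γ / η ^ 2) + 1) with hmdef
  set ν : ℕ := 2 * m + 1 with hνdef
  set N : ℝ := (ν : ℝ) + 1 with hNdef
  have hN2 : N = 2 * ((m : ℝ) + 1) := by rw [hNdef, hνdef]; push_cast; ring
  have hN1 : (1 : ℝ) ≤ N := by
    rw [hN2]; have := Nat.cast_nonneg (α := ℝ) m; linarith
  set xh : ℝ := (Z ν).1 with hxhdef
  set yh : ℝ := (Z ν).2 with hyhdef
  have hZν := hZmem ν
  have hxhb : b ≤ xh := hZν.1.1
  have hyhb : b ≤ yh := hZν.2.1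
  have hMsν : Ms ν = u xh - v yh - (ε * ggA b xh + N * (xh - yh) ^ 2) := by
    rw [hMsdef]; rw [hxhdef, hyhdef, hNdef]; rfl
  have hglobν : ∀ zx zy : ℝ, b ≤ zx → b ≤ zy →
      u zx - v zy - (ε * ggA b zx + N * (zx - zy) ^ 2) ≤ Ms ν := by
    intro zx zy h1 h2
    have h := hglob ν (zx, zy) h1 h2
    rw [FF_apply] at h
    rw [hNdef]
    exact h
  have hglobm : ∀ zx zy : ℝ, b ≤ zx → b ≤ zy →
      u zx - v zy - (ε * ggA b zx + ((m : ℝ) + 1) * (zx - zy) ^ 2) ≤ Ms m := by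
    intro zx zy h1 h2
    have h := hglob m (zx, zy) h1 h2
    rw [FF_apply] at h
    exact h
  have hθν := hMs_lb ν
  -- penalty smallness
  have hgapm : Ms m - Ms ν < γ := hN₁ m (le_max_left _ _)
  have hup : u xh - v yh - (ε * ggA b xh + ((m : ℝ) + 1) * (xh - yh) ^ 2) ≤ Ms m :=
    hglobm xh yh hxhb hyhb
  have hpen1 : ((m : ℝ) + 1) * (xh - yh) ^ 2 ≤ γ := by
    have hexp : u xh - v yh - (ε * ggA b xh + ((m : ℝ) + 1) * (xh - yh) ^ 2)
        = Ms ν + ((m : ℝ) + 1) * (xh - yh) ^ 2 := by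
      rw [hMsν, hN2]; ring
    rw [hexp] at hup; linarith
  have hpen : N * (xh - yh) ^ 2 ≤ 2 * γ := by rw [hN2]; linarith only [hpen1]
  have hm1 : γ / η ^ 2 < (m : ℝ) + 1 := by
    have h1 : γ / η ^ 2 ≤ (Nat.ceil (γ / η ^ 2) : ℝ) := Nat.le_ceil _
    have h2 : (Nat.ceil (γ / η ^ 2) + 1 : ℕ) ≤ m := le_max_right _ _
    have h3 : ((Nat.ceil (γ / η ^ 2) + 1 : ℕ) : ℝ) ≤ (m : ℝ) := Nat.cast_le.2 h2
    push_cast at h3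
    linarith
  have hdd2 : (xh - yh) ^ 2 < η ^ 2 := by
    rw [div_lt_iff₀ (by positivity)] at hm1
    have hm0 : (0 : ℝ) < (m : ℝ) + 1 := by positivity
    have h5 : ((m : ℝ) + 1) * (xh - yh) ^ 2 < ((m : ℝ) + 1) * η ^ 2 := by
      linarith only [hm1, hpen1]
    exact lt_of_mul_lt_mul_left h5 hm0.le
  have hdd : |xh - yh| < η := by
    by_contra hcon2
    push_neg at hcon2
    have h1 : η ^ 2 ≤ |xh - yh| ^ 2 := pow_le_pow_left₀ hη0.le hcon2 2
    rw [sq_abs] at h1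
    linarith only [h1, hdd2]
  -- interiority
  have hvyh0 : 0 ≤ v yh := hv_nonneg _ hyhb
  have hggxh0 : 0 ≤ ggA b xh := ggA_nonneg b hxhb
  have hpen0 : 0 ≤ N * (xh - yh) ^ 2 :=
    mul_nonneg (by linarith only [hN1]) (sq_nonneg _)
  have huxh : 2 * θ ≤ u xh := by
    have hge : 0 ≤ ε * ggA b xh := mul_nonneg hε.le hggxh0
    rw [hMsν] at hθν
    linarith only [hθν, hvyh0, hge, hpen0]
  have hxhη : b + η₂ ≤ xh := by
    by_contra hcon2
    push_neg at hcon2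
    have h1 := hη₂ xh hxhb (by rw [abs_of_nonneg (by linarith)]; linarith)
    linarith
  have hxhIoi : xh ∈ Set.Ioi b := by
    simp only [Set.mem_Ioi]; linarith
  have hyhIoi : yh ∈ Set.Ioi b := by
    simp only [Set.mem_Ioi]
    have h1 : η ≤ η₂ := min_le_left _ _
    have h3 := le_abs_self (xh - yh)
    linarith
  -- sliver value
  set sv : ℝ := u (b + |xh - yh|) with hsvdef
  have habsb : b ≤ b + |xh - yh| := by
    have := abs_nonneg (xh - yh); linarith
  have hsv0 : 0 ≤ sv := hu_nonneg _ habsb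
  have hsmall3 : lam * sv ≤ d * θ / 2 := by
    have h1 : |xh - yh| < η₃ := lt_of_lt_of_le hdd (min_le_right _ _)
    have h2 : u (b + |xh - yh|) < d * θ / (2 * lam) := by
      apply hη₃ _ habsb
      rw [add_sub_cancel_left, abs_of_nonneg (abs_nonneg _)]
      exact h1
    rw [hsvdef]
    have h3 : lam * u (b + |xh - yh|) ≤ lam * (d * θ / (2 * lam)) :=
      mul_le_mul_of_nonneg_left h2.le hlam.le
    have h4 : lam * (d * θ / (2 * lam)) = d * θ / 2 := by field_simp
    linarith
  -- the constant c₀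
  set c₀ : ℝ := Ms ν + ε * ggA b xh + N * (xh - yh) ^ 2 with hc₀def
  have hc₀0 : 0 ≤ c₀ := by
    have hge : 0 ≤ ε * ggA b xh := mul_nonneg hε.le hggxh0
    rw [hc₀def]; linarith
  have huvc₀ : u xh - v yh = c₀ := by rw [hc₀def, hMsν]; ring
  -- pointwise bounds for the nonlocal term
  have hpb : ∀ t ∈ Set.Ioc (0 : ℝ) (min xh yh + p / a), u (xh - t) - v (yh - t) ≤ c₀ := by
    intro t ht
    have hminb : min xh yh + p / a = min xh yh - b := by rw [hbdef]; ring
    have ht2 : t ≤ min xh yh - b := by rw [← hminb]; exact ht.2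
    have h1 : b ≤ xh - t := by have := min_le_left xh yh; linarith
    have h2 : b ≤ yh - t := by have := min_le_right xh yh; linarith
    have hF2 := hglobν (xh - t) (yh - t) h1 h2
    have hsame : (xh - t - (yh - t)) ^ 2 = (xh - yh) ^ 2 := by ring
    rw [hsame] at hF2
    have hggle : ggA b (xh - t) ≤ ggA b xh :=
      ggA_mono b h1 hxhb (by linarith [ht.1])
    have hggmul : ε * ggA b (xh - t) ≤ ε * ggA b xh :=
      mul_le_mul_of_nonneg_left hggle hε.le
    rw [hc₀def]; linarith
  have hsliver : ∀ t ∈ Set.Ioc (yh + p / a) (xh + p / a), u (xh - t) ≤ sv := by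
    intro t ht
    have hb1 : b = -(p / a) := hbdef
    have h1 : b ≤ xh - t := by
      have := ht.2; rw [hb1]; linarith
    have h4 : xh - yh ≤ |xh - yh| := le_abs_self _
    have h2 : xh - t ≤ b + |xh - yh| := by
      have h3 := ht.1
      rw [hb1]; linarith
    rw [hsvdef]
    exact hu_mono h1 habsb h2
  have hIdiff : Iop p a mu u xh - Iop p a mu v yh ≤ c₀ + sv :=
    Iop_diff p a hp ha mu hu_cont hu_mono hu_nonneg hv_cont hv_mono hv_nonneg
      hxhb hyhb hc₀0 hsv0 hpb hsliver
  -- test function for the supersolution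
  set S₁ : ℝ := Real.arsinh (xh - b) with hS₁def
  have hS₁pos : 0 < S₁ := by
    rw [hS₁def, Real.arsinh_pos_iff]
    have := hxhIoi.out; linarith
  set q : ℝ := 2 * N * (xh - yh) with hqdef
  set φ₂ : ℝ → ℝ := fun w => v yh - N * ((xh - w) ^ 2 - (xh - yh) ^ 2) with hφ₂def
  have hφ₂cd : ContDiff ℝ 1 φ₂ := by
    apply ContDiff.sub contDiff_const
    apply ContDiff.mul contDiff_const
    exact ((contDiff_const.sub contDiff_id).pow 2).sub contDiff_const
  have hφ₂val : φ₂ yh = v yh := by rw [hφ₂def]; simp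
  have hφ₂d : HasDerivAt φ₂ q yh := by
    have h3 : HasDerivAt (fun w : ℝ => xh - w) (-1) yh := (hasDerivAt_id yh).const_sub xh
    have h2 := (h3.pow 2).sub_const ((xh - yh) ^ 2)
    have h5 := (h2.const_mul N).const_sub (v yh)
    convert h5 using 1 <;> try rfl
    rw [hqdef]; push_cast; ring
  have hmincond : ∀ w ∈ Set.Ici b, v yh - φ₂ yh ≤ v w - φ₂ w := by
    intro w hw
    have hF2 := hglobν xh w hxhb hw
    rw [hMsν] at hF2
    rw [hφ₂val, hφ₂def]
    simp only
    linarith only [hF2]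
  have hsup := hv_super yh hyhIoi φ₂ hφ₂cd hφ₂val hmincond
  rw [max_le_iff] at hsup
  have hq1 : 1 ≤ q := by
    have h1 := hsup.1
    rw [hφ₂d.deriv] at h1; linarith
  have hLv : drift p r a yh * q - (lam + d) * v yh + lam * Iop p a mu v yh ≤ 0 := by
    have h1 := hsup.2
    rw [Lphi, hφ₂d.deriv] at h1
    exact h1
  -- test function for the subsolution
  set φ₁ : ℝ → ℝ := fun w =>
    u xh + (ε * (ggA b w - ggA b xh) + N * ((w - yh) ^ 2 - (xh - yh) ^ 2)) with hφ₁def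
  have hφ₁cd : ContDiff ℝ 1 φ₁ := by
    apply ContDiff.add contDiff_const
    apply ContDiff.add
    · exact contDiff_const.mul ((contDiff_ggA b).sub contDiff_const)
    · exact contDiff_const.mul (((contDiff_id.sub contDiff_const).pow 2).sub contDiff_const)
  have hφ₁val : φ₁ xh = u xh := by rw [hφ₁def]; simp
  have hφ₁d : HasDerivAt φ₁ (ε * S₁ + q) xh := by
    have h1 : HasDerivAt (fun w => ggA b w - ggA b xh) (S₁) xh := by
      rw [hS₁def]; exact (hasDerivAt_ggA b xh).sub_const _
    have h3 : HasDerivAt (fun w : ℝ => w - yh) 1 xh := (hasDerivAt_id xh).sub_const yh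
    have h2 := (h3.pow 2).sub_const ((xh - yh) ^ 2)
    have h5 := ((h1.const_mul ε).add (h2.const_mul N)).const_add (u xh)
    convert h5 using 1 <;> try rfl
    rw [hqdef]; push_cast; ring
  have hmaxcond : ∀ w ∈ Set.Ici b, u w - φ₁ w ≤ u xh - φ₁ xh := by
    intro w hw
    have hF2 := hglobν w yh hw hyhb
    rw [hMsν] at hF2
    rw [hφ₁val, hφ₁def]
    simp only
    linarith only [hF2]
  have hsub2 := hu_sub xh hxhIoi φ₁ hφ₁cd hφ₁val hmaxcond
  have hBpos : 0 ≤ drift p r a xh * (ε * S₁ + q) - (lam + d) * u xh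
      + lam * Iop p a mu u xh := by
    rcases le_max_iff.1 hsub2 with h | h
    · exfalso
      rw [hφ₁d.deriv] at h
      linarith only [h, hq1, mul_pos hε hS₁pos]
    · rw [Lphi, hφ₁d.deriv] at h
      exact h
  -- combination
  have hdle : drift p r a xh ≤ p + r * (xh - b) := by
    have h1 := drift_le hp hr hra xh (by rw [hbdef] at hxhb; exact hxhb)
    have h2 : xh + p / a = xh - b := by rw [hbdef]; ring
    rw [h2] at h1
    exact h1
  have hdlip := drift_lip (p := p) hr hra xh yh
  have hcross : (drift p r a xh - drift p r a yh) * q ≤ 2 * a * (N * (xh - yh) ^ 2) := by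
    have h1 : (drift p r a xh - drift p r a yh) * q
        ≤ |drift p r a xh - drift p r a yh| * |q| := by
      calc (drift p r a xh - drift p r a yh) * q
          ≤ |(drift p r a xh - drift p r a yh) * q| := le_abs_self _
        _ = |drift p r a xh - drift p r a yh| * |q| := abs_mul _ _
    have h2 : |q| = 2 * N * |xh - yh| := by
      rw [hqdef, abs_mul, abs_of_nonneg (by linarith : (0:ℝ) ≤ 2 * N)]
    have h3 : |drift p r a xh - drift p r a yh| * |q| ≤ a * |xh - yh| * (2 * N * |xh - yh|) := by
      rw [h2]
      apply mul_le_mul_of_nonneg_right hdlip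
      positivity
    have habs2 : |xh - yh| * |xh - yh| = (xh - yh) ^ 2 := by
      rw [← abs_mul, abs_mul_self]; ring
    have h4 : a * |xh - yh| * (2 * N * |xh - yh|) = 2 * a * (N * (xh - yh) ^ 2) := by
      linear_combination (2 * a * N) * habs2
    calc (drift p r a xh - drift p r a yh) * q ≤ |drift p r a xh - drift p r a yh| * |q| := h1
      _ ≤ a * |xh - yh| * (2 * N * |xh - yh|) := h3
      _ = 2 * a * (N * (xh - yh) ^ 2) := h4
  have hEx : (p + r * (xh - b)) * S₁ - d * ggA b xh ≤ K := by
    rw [hS₁def]; exact hKE xh hxhb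
  have t1 : drift p r a xh * (ε * S₁) ≤ ε * ((p + r * (xh - b)) * S₁) := by
    have h := mul_le_mul_of_nonneg_right hdle (mul_nonneg hε.le hS₁pos.le)
    linarith only [h]
  have t2 : ε * ((p + r * (xh - b)) * S₁) ≤ ε * K + ε * (d * ggA b xh) := by
    have h := mul_le_mul_of_nonneg_left hEx hε.le
    linarith only [h]
  have t3 : lam * (Iop p a mu u xh - Iop p a mu v yh) ≤ lam * (c₀ + sv) :=
    mul_le_mul_of_nonneg_left hIdiff hlam.le
  have huvlam : (lam + d) * (u xh - v yh) = (lam + d) * c₀ := by rw [huvc₀]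
  have hdc₀ : d * c₀ = d * Ms ν + d * (ε * ggA b xh) + d * (N * (xh - yh) ^ 2) := by
    rw [hc₀def]; ring
  have hdMs : d * (2 * θ) ≤ d * Ms ν := mul_le_mul_of_nonneg_left (hMs_lb ν) hd.le
  have hdpen : 0 ≤ d * (N * (xh - yh) ^ 2) := mul_nonneg hd.le hpen0
  have hapen : 2 * a * (N * (xh - yh) ^ 2) ≤ 2 * a * (2 * γ) := by
    have h := mul_le_mul_of_nonneg_left hpen (by linarith : (0:ℝ) ≤ 2 * a)
    linarith only [h]
  have hγle : 2 * a * (2 * γ) ≤ d * θ / 4 := by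
    have hden : (0:ℝ) < 16 * a + 16 * lam + 16 := by positivity
    have h1 : γ ≤ d * θ / (16 * a) := by
      rw [hγdef]
      apply div_le_div_of_nonneg_left (by positivity) (by positivity)
      linarith
    have h2 := mul_le_mul_of_nonneg_left h1 (by linarith : (0:ℝ) ≤ 4 * a)
    have h3 : 4 * a * (d * θ / (16 * a)) = d * θ / 4 := by field_simp; ring
    linarith only [h2, h3]
  -- final contradiction
  have hfinal : (0:ℝ) < d * θ := by positivity
  linarith only [hBpos, hLv, t1, t2, t3, hcross, huvlam, hdc₀, hdMs, hdpen, hapen, hγle,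
    hsmall3, hεK, hfinal]


theorem stmt2
    (p lam d r a : ℝ) (hp : 0 < p) (hlam : 0 < lam) (hd : 0 < d)
    (hr : 0 < r) (hra : r < a) (hrd : r < d)
    (mu : Measure ℝ) [IsProbabilityMeasure mu] (hmu : mu (Set.Iic 0) = 0)
    (V W : ℝ → ℝ)
    (hV_mono : MonotoneOn V (Set.Ici (-(p / a))))
    (hV_nonneg : ∀ x ∈ Set.Ici (-(p / a)), 0 ≤ V x)
    (hV_visc : IsViscSol p lam d r a mu V (Set.Ioi (-(p / a))))
    (hV_cont : ContinuousOn V (Set.Ici (-(p / a))))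
    (hV_lip : LocLipOn (Set.Ioi (-(p / a))) V)
    (hV_growth : LinGrowth p a V)
    (hV_bdry : V (-(p / a)) = 0)
    (hW_mono : MonotoneOn W (Set.Ici (-(p / a))))
    (hW_nonneg : ∀ x ∈ Set.Ici (-(p / a)), 0 ≤ W x)
    (hW_visc : IsViscSol p lam d r a mu W (Set.Ioi (-(p / a))))
    (hW_cont : ContinuousOn W (Set.Ici (-(p / a))))
    (hW_lip : LocLipOn (Set.Ioi (-(p / a))) W)
    (hW_growth : LinGrowth p a W)
    (hW_bdry : W (-(p / a)) = 0) :
    ∀ x : ℝ, -(p / a) ≤ x → V x = W x := by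
  intro x hx
  have h1 := comp_le p lam d r a hp hlam hd hr hra hrd mu V W
    hV_mono hV_nonneg hV_visc.1 hV_cont hV_growth hV_bdry
    hW_mono hW_nonneg hW_visc.2 hW_cont hW_bdry
  have h2 := comp_le p lam d r a hp hlam hd hr hra hrd mu W V
    hW_mono hW_nonneg hW_visc.1 hW_cont hW_growth hW_bdry
    hV_mono hV_nonneg hV_visc.2 hV_cont hV_bdry
  exact le_antisymm (h1 x hx) (h2 x hx)
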